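/- The alternating group Alt_19 is not (2,3,7)-generated: there do not exist permutations x, y ∈ Alt_19 with x² = y³ = (xy)⁷ = 1 which generate Alt_19; equivalently, Alt_19 is not a quotient of the triangle group T_{2,3,7}. -/

import Mathlib

set_option linter.unusedSectionVars false
set_option linter.unusedVariables false
set_option maxHeartbeats 1000000

namespace Alt237

open Equiv Equiv.Perm

variable {α : Type*} [Fintype α] [DecidableEq α] {σ : Perm α} {a b u v : α} {p : ℕ}

noncomputable def cyc (σ : Perm α) : ℕ := Nat.card (Quotient (SameCycle.setoid σ))

lemma cyc_le (σ : Perm α) : cyc σ ≤ Nat.card α :=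
  Nat.card_le_card_of_surjective (Quotient.mk _) (Quotient.mk_surjective)

lemma cyc_one : cyc (1 : Perm α) = Nat.card α := by
  refine Nat.card_congr ⟨Quotient.lift id (fun a b h => ?_), Quotient.mk _, ?_, ?_⟩
  · exact (sameCycle_one.mp h)
  · intro q; induction q using Quotient.ind; rfl
  · intro a; rfl

lemma cyc_eq_one [Nonempty α] {σ : Perm α} (h : ∀ u v, σ.SameCycle u v) : cyc σ = 1 := by
  have h1 : Subsingleton (Quotient (SameCycle.setoid σ)) := by
    constructor
    intro q r
    induction q using Quotient.ind
    induction r using Quotient.ind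
    exact Quotient.sound (h _ _)
  have h2 : Nonempty (Quotient (SameCycle.setoid σ)) := Nonempty.map (Quotient.mk _) ‹_›
  exact Nat.card_eq_one_iff_unique.mpr ⟨h1, h2⟩

lemma traj_eq (u : α) : ∀ k : ℕ,
    (∀ j, 1 ≤ j → j ≤ k → (σ ^ j) u ≠ a ∧ (σ ^ j) u ≠ b) →
    ((Equiv.swap a b * σ) ^ k) u = (σ ^ k) u := by
  intro k
  induction k with
  | zero => intro _; rfl
  | succ k ih =>
    intro h
    have hk := ih (fun j h1 h2 => h j h1 (h2.trans (Nat.le_succ k)))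
    have hs : ((Equiv.swap a b * σ) ^ (k+1)) u
        = (Equiv.swap a b * σ) (((Equiv.swap a b * σ) ^ k) u) := by
      rw [pow_succ']; rfl
    have hs2 : (σ ^ (k+1)) u = σ ((σ ^ k) u) := by rw [pow_succ']; rfl
    have hnab := h (k+1) (Nat.le_add_left 1 k) le_rfl
    rw [hs, hk, mul_apply, ← hs2, Equiv.swap_apply_of_ne_of_ne hnab.1 hnab.2, hs2]

lemma traj_hit (u : α) (h : ∃ k, 1 ≤ k ∧ ((σ ^ k) u = a ∨ (σ ^ k) u = b)) :
    ∃ m, 1 ≤ m ∧ ((σ ^ m) u = a ∨ (σ ^ m) u = b) ∧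
      ((Equiv.swap a b * σ) ^ m) u = Equiv.swap a b ((σ ^ m) u) := by
  classical
  have hspec := Nat.find_spec h
  set m := Nat.find h with hm
  refine ⟨m, hspec.1, hspec.2, ?_⟩
  have hmin : ∀ j, 1 ≤ j → j ≤ m - 1 → (σ ^ j) u ≠ a ∧ (σ ^ j) u ≠ b := by
    intro j h1 h2
    have hj : j < m := by omega
    have h3 := Nat.find_min h hj
    push_neg at h3
    have h4 := h3 h1
    exact h4
  have hprev := traj_eq (a := a) (b := b) u (m - 1) hmin
  have hm1 : m - 1 + 1 = m := by omega
  have hstep : σ ((σ ^ (m-1)) u) = (σ ^ m) u := by rw [← hm1, pow_succ']; rfl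
  calc ((Equiv.swap a b * σ) ^ m) u
      = (Equiv.swap a b * σ) (((Equiv.swap a b * σ) ^ (m-1)) u) := by
        rw [← hm1, pow_succ']; rfl
    _ = Equiv.swap a b (σ ((σ ^ (m-1)) u)) := by rw [hprev]; rfl
    _ = Equiv.swap a b ((σ ^ m) u) := by rw [hstep]

lemma sc_of_pow {k : ℕ} (h : (σ ^ k) u = v) : σ.SameCycle u v :=
  ⟨(k : ℤ), by rw [zpow_natCast, h]⟩

lemma sc_to_pow (h : σ.SameCycle u v) : ∃ i : ℕ, (σ ^ i) u = v := by
  obtain ⟨i, _, hi⟩ := h.exists_pow_eq'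
  exact ⟨i, hi⟩


lemma mem_U_transfer (hu : σ.SameCycle u a ∨ σ.SameCycle u b) :
    (Equiv.swap a b * σ).SameCycle u a ∨ (Equiv.swap a b * σ).SameCycle u b := by
  by_cases hua : u = a
  · exact Or.inl (hua ▸ SameCycle.rfl)
  by_cases hub : u = b
  · exact Or.inr (hub ▸ SameCycle.rfl)
  have hhit : ∃ k, 1 ≤ k ∧ ((σ ^ k) u = a ∨ (σ ^ k) u = b) := by
    rcases hu with h | h
    · obtain ⟨i, hi⟩ := sc_to_pow h
      refine ⟨i, ?_, Or.inl hi⟩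
      rcases Nat.eq_zero_or_pos i with rfl | h1
      · exact absurd hi hua
      · exact h1
    · obtain ⟨i, hi⟩ := sc_to_pow h
      refine ⟨i, ?_, Or.inr hi⟩
      rcases Nat.eq_zero_or_pos i with rfl | h1
      · exact absurd hi hub
      · exact h1
  obtain ⟨m, _, hor, heq⟩ := traj_hit u hhit
  rcases hor with h | h
  · rw [h, Equiv.swap_apply_left] at heq
    exact Or.inr (sc_of_pow heq)
  · rw [h, Equiv.swap_apply_right] at heq
    exact Or.inl (sc_of_pow heq)

lemma merge_sc_ba (hm : ¬ σ.SameCycle a b) :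
    (Equiv.swap a b * σ).SameCycle b a := by
  have hhit : ∃ k, 1 ≤ k ∧ ((σ ^ k) b = a ∨ (σ ^ k) b = b) :=
    ⟨orderOf σ, orderOf_pos σ, Or.inr (by rw [pow_orderOf_eq_one]; rfl)⟩
  obtain ⟨m, _, hor, heq⟩ := traj_hit b hhit
  rcases hor with h | h
  · exact absurd (sc_of_pow h).symm hm
  · rw [h, Equiv.swap_apply_right] at heq
    exact sc_of_pow heq

lemma traj_eq_off (hua : ¬ σ.SameCycle u a) (hub : ¬ σ.SameCycle u b) (k : ℕ) :
    ((Equiv.swap a b * σ) ^ k) u = (σ ^ k) u := by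
  exact traj_eq u k (fun j _ _ => ⟨fun e => hua (sc_of_pow e), fun e => hub (sc_of_pow e)⟩)

lemma off_mono (hua : ¬ σ.SameCycle u a) (hub : ¬ σ.SameCycle u b)
    (h : σ.SameCycle u v) : (Equiv.swap a b * σ).SameCycle u v := by
  obtain ⟨i, hi⟩ := sc_to_pow h
  exact sc_of_pow (by rw [traj_eq_off hua hub]; exact hi)

lemma off_anti (hua : ¬ σ.SameCycle u a) (hub : ¬ σ.SameCycle u b)
    (h : (Equiv.swap a b * σ).SameCycle u v) : σ.SameCycle u v := by
  obtain ⟨i, hi⟩ := sc_to_pow h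
  exact sc_of_pow (by rw [← traj_eq_off hua hub]; exact hi)

lemma swap_mul_closure {r : α → α → Prop} (hr : Equivalence r)
    (hsub : ∀ u v, σ.SameCycle u v → r u v) (hab : r a b) :
    ∀ u v, (Equiv.swap a b * σ).SameCycle u v → r u v := by
  have hstep : ∀ w, r w ((Equiv.swap a b * σ) w) := by
    intro w
    have hws : r w (σ w) := hsub _ _ ⟨1, by rw [zpow_one]⟩
    by_cases h1 : σ w = a
    · have : (Equiv.swap a b * σ) w = b := by rw [mul_apply, h1, Equiv.swap_apply_left]
      rw [this]; exact hr.trans (h1 ▸ hws) hab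
    by_cases h2 : σ w = b
    · have : (Equiv.swap a b * σ) w = a := by rw [mul_apply, h2, Equiv.swap_apply_right]
      rw [this]; exact hr.trans (h2 ▸ hws) (hr.symm hab)
    · have : (Equiv.swap a b * σ) w = σ w := by rw [mul_apply, Equiv.swap_apply_of_ne_of_ne h1 h2]
      rw [this]; exact hws
  have hpow : ∀ (k : ℕ) (w : α), r w (((Equiv.swap a b * σ) ^ k) w) := by
    intro k
    induction k with
    | zero => intro w; exact hr.refl w
    | succ k ih =>
      intro w
      have : ((Equiv.swap a b * σ) ^ (k+1)) w
          = (Equiv.swap a b * σ) (((Equiv.swap a b * σ) ^ k) w) := by rw [pow_succ']; rfl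
      rw [this]
      exact hr.trans (ih w) (hstep _)
  intro u v h
  obtain ⟨i, hi⟩ := sc_to_pow h
  exact hi ▸ hpow i u

lemma merge_mono (hm : ¬ σ.SameCycle a b)
    (huv : σ.SameCycle u v) : (Equiv.swap a b * σ).SameCycle u v := by
  by_cases hU : σ.SameCycle u a ∨ σ.SameCycle u b
  · have hVU : σ.SameCycle v a ∨ σ.SameCycle v b := by
      rcases hU with h | h
      · exact Or.inl (huv.symm.trans h)
      · exact Or.inr (huv.symm.trans h)
    have h1 := mem_U_transfer hU
    have h2 := mem_U_transfer hVU
    have hba := merge_sc_ba hm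
    have h1a : (Equiv.swap a b * σ).SameCycle u a := by
      rcases h1 with h | h
      · exact h
      · exact h.trans hba
    have h2a : (Equiv.swap a b * σ).SameCycle v a := by
      rcases h2 with h | h
      · exact h
      · exact h.trans hba
    exact h1a.trans h2a.symm
  · push_neg at hU
    exact off_mono hU.1 hU.2 huv

lemma qsound (h : σ.SameCycle u v) :
    (Quotient.mk (SameCycle.setoid σ) u) = Quotient.mk (SameCycle.setoid σ) v :=
  Quotient.sound h

lemma qexact (h : Quotient.mk (SameCycle.setoid σ) u = Quotient.mk (SameCycle.setoid σ) v) :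
    σ.SameCycle u v := Quotient.exact h

lemma nat_card_option (X : Type*) [Finite X] : Nat.card (Option X) = Nat.card X + 1 := by
  have := Fintype.ofFinite X
  simp [Nat.card_eq_fintype_card]

lemma U_sat (h : (Equiv.swap a b * σ).SameCycle u v)
    (hw : σ.SameCycle u a ∨ σ.SameCycle u b) :
    σ.SameCycle v a ∨ σ.SameCycle v b := by
  by_contra hW
  push_neg at hW
  have h2 : σ.SameCycle v u := off_anti hW.1 hW.2 h.symm
  rcases hw with h3 | h3
  · exact hW.1 (h2.trans h3)
  · exact hW.2 (h2.trans h3)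

open scoped Classical in
lemma cyc_swap_mul_le (σ : Perm α) (a b : α) :
    cyc (Equiv.swap a b * σ) ≤ cyc σ + 1 := by
  set t := Equiv.swap a b * σ with ht
  set f : α → Option (Quotient (SameCycle.setoid σ)) := fun w =>
    if σ.SameCycle w a ∨ σ.SameCycle w b then
      (if t.SameCycle w a then none else some (Quotient.mk _ a))
    else some (Quotient.mk _ w) with hf
  have hfval : ∀ w : α, f w =
      if σ.SameCycle w a ∨ σ.SameCycle w b then
        (if t.SameCycle w a then none else some (Quotient.mk _ a))
      else some (Quotient.mk _ w) := fun w => rfl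
  have hwd : ∀ w w' : α, t.SameCycle w w' → f w = f w' := by
    intro w w' h
    rw [hfval, hfval]
    by_cases hw : σ.SameCycle w a ∨ σ.SameCycle w b
    · have hw' : σ.SameCycle w' a ∨ σ.SameCycle w' b := U_sat h hw
      rw [if_pos hw, if_pos hw']
      by_cases h1 : t.SameCycle w a
      · rw [if_pos h1, if_pos (h.symm.trans h1)]
      · rw [if_neg h1, if_neg (fun e => h1 (h.trans e))]
    · have hw' : ¬(σ.SameCycle w' a ∨ σ.SameCycle w' b) := fun e => hw (U_sat h.symm e)
      rw [if_neg hw, if_neg hw']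
      push_neg at hw
      exact congrArg some (qsound (off_anti hw.1 hw.2 h))
  have hinj : ∀ w w' : α, f w = f w' → t.SameCycle w w' := by
    intro w w' hfe
    rw [hfval, hfval] at hfe
    by_cases hw : σ.SameCycle w a ∨ σ.SameCycle w b
      <;> by_cases hw' : σ.SameCycle w' a ∨ σ.SameCycle w' b
    · rw [if_pos hw, if_pos hw'] at hfe
      by_cases h1 : t.SameCycle w a <;> by_cases h2 : t.SameCycle w' a
      · exact h1.trans h2.symm
      · rw [if_pos h1, if_neg h2] at hfe; exact absurd hfe (by simp)
      · rw [if_neg h1, if_pos h2] at hfe; exact absurd hfe (by simp)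
      · have hb1 : t.SameCycle w b := (mem_U_transfer hw).resolve_left h1
        have hb2 : t.SameCycle w' b := (mem_U_transfer hw').resolve_left h2
        exact hb1.trans hb2.symm
    · rw [if_pos hw, if_neg hw'] at hfe
      by_cases h1 : t.SameCycle w a
      · rw [if_pos h1] at hfe; exact absurd hfe (by simp)
      · rw [if_neg h1] at hfe
        have := qexact (Option.some_injective _ hfe)
        exact absurd (Or.inl this.symm) hw'
    · rw [if_pos hw', if_neg hw] at hfe
      by_cases h2 : t.SameCycle w' a
      · rw [if_pos h2] at hfe; exact absurd hfe (by simp)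
      · rw [if_neg h2] at hfe
        have := qexact (Option.some_injective _ hfe)
        exact absurd (Or.inl this) hw
    · rw [if_neg hw, if_neg hw'] at hfe
      have := qexact (Option.some_injective _ hfe)
      push_neg at hw
      exact off_mono hw.1 hw.2 this
  have hF : Function.Injective (Quotient.lift f hwd :
      Quotient (SameCycle.setoid t) → Option (Quotient (SameCycle.setoid σ))) := by
    intro q q'
    induction q using Quotient.ind
    induction q' using Quotient.ind
    intro h
    exact Quotient.sound (hinj _ _ h)
  have hcard := Nat.card_le_card_of_injective _ hF
  rwa [nat_card_option] at hcard

open scoped Classical in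
lemma cyc_swap_mul_merge (hm : ¬ σ.SameCycle a b) :
    cyc (Equiv.swap a b * σ) + 1 ≤ cyc σ := by
  set t := Equiv.swap a b * σ with ht
  set f : α → Quotient (SameCycle.setoid σ) := fun w =>
    if σ.SameCycle w a ∨ σ.SameCycle w b then Quotient.mk _ a else Quotient.mk _ w with hf
  have hfval : ∀ w : α, f w =
      if σ.SameCycle w a ∨ σ.SameCycle w b then
        Quotient.mk (SameCycle.setoid σ) a else Quotient.mk _ w := fun w => rfl
  have hwd : ∀ w w' : α, t.SameCycle w w' → f w = f w' := by
    intro w w' h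
    rw [hfval, hfval]
    by_cases hw : σ.SameCycle w a ∨ σ.SameCycle w b
    · rw [if_pos hw, if_pos (U_sat h hw)]
    · have hw' : ¬(σ.SameCycle w' a ∨ σ.SameCycle w' b) := fun e => hw (U_sat h.symm e)
      rw [if_neg hw, if_neg hw']
      push_neg at hw
      exact qsound (off_anti hw.1 hw.2 h)
  have hba := merge_sc_ba hm
  have hinj : Function.Injective (fun o : Option (Quotient (SameCycle.setoid t)) =>
      o.elim (Quotient.mk (SameCycle.setoid σ) b) (Quotient.lift f hwd)) := by
    have haux : ∀ w : α, f w = Quotient.mk (SameCycle.setoid σ) b → False := by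
      intro w h
      rw [hfval] at h
      by_cases hw : σ.SameCycle w a ∨ σ.SameCycle w b
      · rw [if_pos hw] at h
        exact hm (qexact h)
      · rw [if_neg hw] at h
        exact hw (Or.inr (qexact h))
    intro o o'
    match o, o' with
    | none, none => intro _; rfl
    | none, some q =>
      induction q using Quotient.ind with | _ w =>
      intro h
      exact absurd ((haux w) (Eq.symm h)).elim id
    | some q, none =>
      induction q using Quotient.ind with | _ w =>
      intro h
      exact absurd ((haux w) h).elim id
    | some q, some q' =>
      induction q using Quotient.ind with | _ w =>
      induction q' using Quotient.ind with | _ w' =>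
      intro h
      simp only [Option.elim, Quotient.lift_mk] at h
      refine congrArg some (Quotient.sound (?_ : t.SameCycle w w'))
      rw [hfval, hfval] at h
      by_cases hw : σ.SameCycle w a ∨ σ.SameCycle w b
        <;> by_cases hw' : σ.SameCycle w' a ∨ σ.SameCycle w' b
      · have h1 : t.SameCycle w a := by
          rcases mem_U_transfer hw with h1 | h1
          · exact h1
          · exact h1.trans hba
        have h2 : t.SameCycle w' a := by
          rcases mem_U_transfer hw' with h2 | h2
          · exact h2
          · exact h2.trans hba
        exact h1.trans h2.symm
      · rw [if_pos hw, if_neg hw'] at h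
        exact absurd (Or.inl (qexact h).symm) hw'
      · rw [if_pos hw', if_neg hw] at h
        exact absurd (Or.inl (qexact h)) hw
      · rw [if_neg hw, if_neg hw'] at h
        push_neg at hw
        exact off_mono hw.1 hw.2 (qexact h)
  have hcard := Nat.card_le_card_of_injective _ hinj
  rwa [nat_card_option] at hcard

def sprod (l : List (α × α)) : Perm α := (l.map fun e => Equiv.swap e.1 e.2).prod

@[simp] lemma sprod_nil : sprod ([] : List (α × α)) = 1 := rfl

@[simp] lemma sprod_cons (e : α × α) (l : List (α × α)) :
    sprod (e :: l) = Equiv.swap e.1 e.2 * sprod l := by simp [sprod]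

lemma sprod_append (l₁ l₂ : List (α × α)) : sprod (l₁ ++ l₂) = sprod l₁ * sprod l₂ := by
  simp [sprod]

lemma sign_sprod (l : List (α × α)) (hl : ∀ e ∈ l, e.1 ≠ e.2) :
    Equiv.Perm.sign (sprod l) = (-1) ^ l.length := by
  induction l with
  | nil => simp
  | cons e t ih =>
    simp only [sprod_cons, map_mul, List.length_cons]
    rw [sign_swap (hl e (List.mem_cons_self)), ih (fun e' he' => hl e' (List.mem_cons_of_mem _ he'))]
    rw [pow_succ]
    exact mul_comm _ _

lemma exists_swap_factorization :
    ∀ (k : ℕ) (σ : Perm α), Nat.card α - cyc σ = k →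
    ∃ l : List (α × α), sprod l = σ ∧ (∀ e ∈ l, e.1 ≠ e.2) ∧
      l.length + cyc σ = Nat.card α := by
  intro k
  induction k using Nat.strong_induction_on with
  | _ k ih =>
  intro σ hk
  by_cases h1 : σ = 1
  · subst h1
    refine ⟨[], rfl, by simp, by simp [cyc_one]⟩
  · have ha : ∃ a, σ a ≠ a := by
      by_contra hc
      push_neg at hc
      exact h1 (Equiv.ext fun w => hc w)
    obtain ⟨a, hσa⟩ := ha
    have hab : a ≠ σ a := Ne.symm hσa
    set b := σ a with hb
    have hfix : (Equiv.swap a b * σ) a = a := by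
      rw [mul_apply, ← hb, Equiv.swap_apply_right]
    have hnot : ¬ (Equiv.swap a b * σ).SameCycle a b :=
      fun h => hab (h.eq_of_left hfix)
    have hle := cyc_swap_mul_le σ a b
    have hswsw : Equiv.swap a b * (Equiv.swap a b * σ) = σ := by
      rw [← mul_assoc, Equiv.swap_mul_self, one_mul]
    have hge : cyc σ + 1 ≤ cyc (Equiv.swap a b * σ) := by
      have h2 := cyc_swap_mul_merge hnot
      rwa [hswsw] at h2
    have hceq : cyc (Equiv.swap a b * σ) = cyc σ + 1 := le_antisymm hle hge
    have hub := cyc_le (Equiv.swap a b * σ)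
    have hklt : Nat.card α - cyc (Equiv.swap a b * σ) < k := by omega
    obtain ⟨l', hp, hd, hlen⟩ := ih _ hklt (Equiv.swap a b * σ) rfl
    refine ⟨(a, b) :: l', ?_, ?_, ?_⟩
    · rw [sprod_cons, hp, hswsw]
    · intro e he
      rcases List.mem_cons.mp he with h | h
      · rw [h]; exact hab
      · exact hd e h
    · simp only [List.length_cons]
      omega

lemma chain [Nonempty α] : ∀ l : List (α × α),
    ∃ ρ : Perm α,
      (∀ u v, (sprod l).SameCycle u v → ρ.SameCycle u v) ∧
      (∀ e ∈ l, ρ.SameCycle e.1 e.2) ∧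
      cyc (sprod l) + 2 * Nat.card α ≤ l.length + Nat.card α + 2 * cyc ρ := by
  intro l
  induction l with
  | nil =>
    refine ⟨1, ?_, by simp, by simp [cyc_one, Nat.card_eq_fintype_card]⟩
    simp only [sprod_nil]
    exact fun u v h => h
  | cons e t ih =>
    obtain ⟨ρ, hi, hii, hcount⟩ := ih
    by_cases hπ : (sprod t).SameCycle e.1 e.2
    · refine ⟨ρ, ?_, ?_, ?_⟩
      · rw [sprod_cons]
        exact swap_mul_closure (SameCycle.equivalence ρ) hi (hi _ _ hπ)
      · intro e' he'
        rcases List.mem_cons.mp he' with h | h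
        · rw [h]; exact hi _ _ hπ
        · exact hii e' h
      · rw [sprod_cons]
        have := cyc_swap_mul_le (sprod t) e.1 e.2
        simp only [List.length_cons]
        omega
    · by_cases hρ : ρ.SameCycle e.1 e.2
      · refine ⟨ρ, ?_, ?_, ?_⟩
        · rw [sprod_cons]
          exact swap_mul_closure (SameCycle.equivalence ρ) hi hρ
        · intro e' he'
          rcases List.mem_cons.mp he' with h | h
          · rw [h]; exact hρ
          · exact hii e' h
        · rw [sprod_cons]
          have := cyc_swap_mul_merge hπ
          simp only [List.length_cons]
          omega
      · refine ⟨Equiv.swap e.1 e.2 * ρ, ?_, ?_, ?_⟩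
        · rw [sprod_cons]
          exact swap_mul_closure (SameCycle.equivalence _)
            (fun u v h => merge_mono hρ (hi u v h)) (merge_sc_ba hρ).symm
        · intro e' he'
          rcases List.mem_cons.mp he' with h | h
          · rw [h]; exact (merge_sc_ba hρ).symm
          · exact merge_mono hρ (hii e' h)
        · rw [sprod_cons]
          have h2 := cyc_swap_mul_merge hπ
          have h3 : cyc ρ ≤ cyc (Equiv.swap e.1 e.2 * ρ) + 1 := by
            have h4 := cyc_swap_mul_le (Equiv.swap e.1 e.2 * ρ) e.1 e.2
            rwa [← mul_assoc, Equiv.swap_mul_self, one_mul] at h4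
          simp only [List.length_cons]
          omega

lemma moved_pow (h : σ u ≠ u) (j : ℕ) : σ ((σ ^ j) u) ≠ (σ ^ j) u := by
  intro hc
  apply h
  have hcomm : σ ((σ ^ j) u) = (σ ^ j) (σ u) := by
    rw [← mul_apply, ← mul_apply, ← pow_succ, ← pow_succ']
  rw [hcomm] at hc
  exact (σ ^ j).injective hc

lemma fix_of_pow_fix (hp : p.Prime) (hσ : σ ^ p = 1) {m : ℕ} (hm1 : 0 < m) (hmp : m < p)
    (h : (σ ^ m) u = u) : σ u = u := by
  have hcop : Nat.Coprime m p := Nat.Coprime.symm <|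
    (Nat.Prime.coprime_iff_not_dvd hp).mpr (fun hd => by
      have := Nat.le_of_dvd hm1 hd; omega)
  have hfixm : Function.IsFixedPt (σ ^ (m : ℤ)) u := by
    show (σ ^ (m : ℤ)) u = u
    rw [zpow_natCast]; exact h
  have hbez : (1 : ℤ) = m * Nat.gcdA m p + p * Nat.gcdB m p := by
    have := Nat.gcd_eq_gcd_ab m p
    rwa [hcop] at this
  have hA : (σ ^ ((m : ℤ) * Nat.gcdA m p)) u = u := by
    rw [zpow_mul]
    exact hfixm.perm_zpow _
  have hB : (σ ^ ((p : ℤ) * Nat.gcdB m p)) = 1 := by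
    rw [zpow_mul, zpow_natCast, hσ, one_zpow]
  have : (σ ^ (1 : ℤ)) u = u := by
    rw [hbez, zpow_add, mul_apply, hB]
    simpa using hA
  simpa using this

lemma cyc_prime (hp : p.Prime) (hσ : σ ^ p = 1) :
    ∃ f k : ℕ, cyc σ = f + k ∧ Nat.card α = f + p * k := by
  classical
  set Q := Quotient (SameCycle.setoid σ) with hQ
  set P : Q → Prop := fun q => σ q.out = q.out with hP
  refine ⟨Nat.card {q : Q // P q}, Nat.card {q : Q // ¬ P q}, ?_, ?_⟩
  · rw [cyc, ← hQ, ← Nat.card_sum]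
    exact Nat.card_congr (Equiv.sumCompl P).symm
  · -- split α into fixed and moved points
    have hsplit : Nat.card α
        = Nat.card {u : α // σ u = u} + Nat.card {u : α // ¬ (σ u = u)} := by
      rw [← Nat.card_sum]
      exact Nat.card_congr (Equiv.sumCompl _).symm
    -- fixed points ≃ fixed classes
    have hfixed : Nat.card {q : Q // P q} = Nat.card {u : α // σ u = u} := by
      refine Nat.card_eq_of_bijective (fun q => ⟨q.1.out, q.2⟩) ⟨?_, ?_⟩
      · intro q r h
        have : q.1.out = r.1.out := congrArg Subtype.val h
        exact Subtype.ext (by rw [← Quotient.out_eq q.1, ← Quotient.out_eq r.1, this])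
      · intro ⟨w, hw⟩
        have hsc : σ.SameCycle (Quotient.mk (SameCycle.setoid σ) w).out w :=
          @Quotient.mk_out α (SameCycle.setoid σ) w
        have hfix : σ (Quotient.mk (SameCycle.setoid σ) w).out
            = (Quotient.mk (SameCycle.setoid σ) w).out := hsc.apply_eq_self_iff.mpr hw
        refine ⟨⟨Quotient.mk _ w, hfix⟩, ?_⟩
        exact Subtype.ext (hsc.eq_of_right hw)
    -- moved points ≃ moved classes × Fin p
    have hmoved : Nat.card {u : α // ¬ (σ u = u)}
        = Nat.card ({q : Q // ¬ P q} × Fin p) := by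
      refine (Nat.card_eq_of_bijective
        (fun x => ⟨(σ ^ (x.2 : ℕ)) x.1.1.out, moved_pow x.1.2 _⟩) ⟨?_, ?_⟩).symm
      · rintro ⟨⟨q, hq⟩, j⟩ ⟨⟨r, hr⟩, i⟩ h
        have hval : (σ ^ (j : ℕ)) q.out = (σ ^ (i : ℕ)) r.out := congrArg Subtype.val h
        have hqr : q = r := by
          have hsc : σ.SameCycle q.out r.out :=
            (sc_of_pow hval).trans (sc_of_pow (rfl : (σ ^ (i:ℕ)) r.out = _)).symm
          rw [← Quotient.out_eq q, ← Quotient.out_eq r]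
          exact Quotient.sound hsc
        subst hqr
        have hji : (j : ℕ) = (i : ℕ) := by
          by_contra hne
          rcases Nat.lt_or_ge (j : ℕ) (i : ℕ) with hlt | hge
          · -- σ^(i-j) fixes q.out
            have : (σ ^ ((i : ℕ) - (j : ℕ))) q.out = q.out := by
              apply (σ ^ (j : ℕ)).injective
              rw [← mul_apply, ← pow_add]
              rw [show (j : ℕ) + ((i : ℕ) - (j : ℕ)) = (i : ℕ) by omega]
              exact hval.symm
            exact hq (fix_of_pow_fix hp hσ (by omega) (by omega) this)
          · have hlt2 : (i : ℕ) < (j : ℕ) := by omega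
            have : (σ ^ ((j : ℕ) - (i : ℕ))) q.out = q.out := by
              apply (σ ^ (i : ℕ)).injective
              rw [← mul_apply, ← pow_add]
              rw [show (i : ℕ) + ((j : ℕ) - (i : ℕ)) = (j : ℕ) by omega]
              exact hval
            exact hq (fix_of_pow_fix hp hσ (by omega) (by omega) this)
        exact Prod.ext (Subtype.ext rfl) (Fin.ext hji)
      · rintro ⟨w, hw⟩
        have hsc : σ.SameCycle (Quotient.mk (SameCycle.setoid σ) w).out w :=
          @Quotient.mk_out α (SameCycle.setoid σ) w
        have hqm : ¬ P (Quotient.mk (SameCycle.setoid σ) w) := by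
          intro hfix
          exact hw (hsc.apply_eq_self_iff.mp hfix)
        obtain ⟨i, hi⟩ := sc_to_pow hsc
        have hmod : (σ ^ (i % p)) (Quotient.mk (SameCycle.setoid σ) w).out = w := by
          have : σ ^ i = σ ^ (i % p) * (σ ^ p) ^ (i / p) := by
            rw [← pow_mul, ← pow_add, Nat.mod_add_div]
          rw [this, hσ, one_pow, mul_one] at hi
          exact hi
        refine ⟨⟨⟨_, hqm⟩, ⟨i % p, Nat.mod_lt _ hp.pos⟩⟩, Subtype.ext ?_⟩
        exact hmod
    rw [hsplit, hfixed, hmoved, Nat.card_prod]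
    have hfin : Nat.card (Fin p) = p := by
      rw [Nat.card_eq_fintype_card, Fintype.card_fin]
    rw [hfin, mul_comm]

lemma sprod_mem {S : Set (Perm α)} (l : List (α × α))
    (h : ∀ e ∈ l, Equiv.swap e.1 e.2 ∈ S) : sprod l ∈ Subgroup.closure S := by
  induction l with
  | nil => exact one_mem _
  | cons e t ih =>
    rw [sprod_cons]
    exact mul_mem (Subgroup.subset_closure (h e (List.mem_cons_self)))
      (ih fun e' he' => h e' (List.mem_cons_of_mem _ he'))

end Alt237

/-- `Alt_m` is `(a,b,c)`-generated: there exist `x, y ∈ Alt_m` with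
`x^a = y^b = (xy)^c = 1` generating the alternating group; equivalently `Alt_m` is a
quotient of the triangle group `T_{a,b,c}`. -/
def AltIsGenerated (m a b c : ℕ) : Prop :=
  ∃ x y : Equiv.Perm (Fin m),
    x ∈ alternatingGroup (Fin m) ∧ y ∈ alternatingGroup (Fin m) ∧
    x ^ a = 1 ∧ y ^ b = 1 ∧ (x * y) ^ c = 1 ∧
    Subgroup.closure {x, y} = alternatingGroup (Fin m)

/-- `Alt_19` is not `(2,3,7)`-generated. -/
theorem alt19_not_237_generated : ¬ AltIsGenerated 19 2 3 7 := by
  rintro ⟨x, y, hxA, hyA, hx2, hy3, hxy7, hgen⟩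
  open Alt237 Equiv Equiv.Perm in
  have hcard : Nat.card (Fin 19) = 19 := by simp
  -- factorizations
  obtain ⟨Lx, hLx1, hLx2, hLx3⟩ :=
    Alt237.exists_swap_factorization (Nat.card (Fin 19) - Alt237.cyc x) x rfl
  obtain ⟨Ly, hLy1, hLy2, hLy3⟩ :=
    Alt237.exists_swap_factorization (Nat.card (Fin 19) - Alt237.cyc y) y rfl
  obtain ⟨Lz, hLz1, hLz2, hLz3⟩ :=
    Alt237.exists_swap_factorization (Nat.card (Fin 19) - Alt237.cyc (x * y)⁻¹) (x * y)⁻¹ rfl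
  rw [hcard] at hLx3 hLy3 hLz3
  -- length bounds
  obtain ⟨fx, kx, hcx, hnx⟩ := Alt237.cyc_prime Nat.prime_two hx2
  obtain ⟨fy, ky, hcy, hny⟩ := Alt237.cyc_prime Nat.prime_three hy3
  have hz7 : ((x * y)⁻¹) ^ 7 = 1 := by rw [inv_pow, hxy7, inv_one]
  obtain ⟨fz, kz, hcz, hnz⟩ := Alt237.cyc_prime (by norm_num : Nat.Prime 7) hz7
  rw [hcard] at hnx hny hnz
  have hevenx : Even Lx.length := by
    have hsign := Alt237.sign_sprod Lx hLx2
    rw [hLx1] at hsign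
    rw [Equiv.Perm.mem_alternatingGroup] at hxA
    rw [hxA] at hsign
    by_contra hodd
    rw [Nat.not_even_iff_odd] at hodd
    rw [hodd.neg_one_pow] at hsign
    exact absurd hsign (by decide)
  obtain ⟨mx, hmx⟩ := hevenx
  have hbx : Lx.length ≤ 8 := by omega
  have hby : Ly.length ≤ 12 := by omega
  have hbz : Lz.length ≤ 12 := by omega
  -- the chain argument
  set L := Lx ++ (Ly ++ Lz) with hL
  have hLprod : Alt237.sprod L = 1 := by
    rw [hL, Alt237.sprod_append, Alt237.sprod_append, hLx1, hLy1, hLz1]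
    group
  obtain ⟨ρ, hi, hii, hcount⟩ := Alt237.chain L
  -- ρ relates everything
  set S : Set (Equiv.Perm (Fin 19)) := {g | ∃ e ∈ L, g = Equiv.swap e.1 e.2} with hS
  have hstep : ∀ g ∈ Subgroup.closure S, ∀ u, ρ.SameCycle u (g u) := by
    intro g hg
    induction hg using Subgroup.closure_induction with
    | mem g hgS =>
      obtain ⟨e, heL, rfl⟩ := hgS
      intro u
      by_cases h1 : u = e.1
      · subst h1
        rw [Equiv.swap_apply_left]
        exact hii e heL
      by_cases h2 : u = e.2
      · subst h2
        rw [Equiv.swap_apply_right]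
        exact (hii e heL).symm
      · rw [Equiv.swap_apply_of_ne_of_ne h1 h2]
    | one => intro u; exact Equiv.Perm.SameCycle.rfl
    | mul g h hgc hhc ihg ihh =>
      intro u
      rw [Equiv.Perm.mul_apply]
      exact (ihh u).trans (ihg (h u))
    | inv g hgc ihg =>
      intro u
      have := ihg (g⁻¹ u)
      rw [show g (g⁻¹ u) = u by simp] at this
      exact this.symm
  have hsub : alternatingGroup (Fin 19) ≤ Subgroup.closure S := by
    rw [← hgen]
    rw [Subgroup.closure_le]
    rintro g (rfl | rfl)
    · rw [← hLx1]
      exact Alt237.sprod_mem Lx fun e he => ⟨e, by simp [hL, he], rfl⟩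
    · rw [← hLy1]
      exact Alt237.sprod_mem Ly fun e he => ⟨e, by simp [hL, he], rfl⟩
  have htot : ∀ u w : Fin 19, ρ.SameCycle u w := by
    intro u w
    by_cases huw : u = w
    · exact huw ▸ Equiv.Perm.SameCycle.rfl
    -- build an even permutation sending u to w
    have hcard2 : 1 < (({u, w}ᶜ : Finset (Fin 19))).card := by
      have h1 : ({u, w} : Finset (Fin 19)).card ≤ 2 := Finset.card_insert_le _ _ |>.trans (by simp)
      have h2 : (({u, w}ᶜ : Finset (Fin 19))).card = 19 - ({u, w} : Finset (Fin 19)).card := by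
        rw [Finset.card_compl]
        simp
      omega
    rw [Finset.one_lt_card] at hcard2
    obtain ⟨c, hc, d, hd, hcd⟩ := hcard2
    rw [Finset.mem_compl, Finset.mem_insert, Finset.mem_singleton] at hc hd
    push_neg at hc hd
    set g := Equiv.swap u w * Equiv.swap c d with hg
    have hgA : g ∈ alternatingGroup (Fin 19) := by
      rw [Equiv.Perm.mem_alternatingGroup, hg, Equiv.Perm.sign_mul,
        Equiv.Perm.sign_swap huw, Equiv.Perm.sign_swap hcd]
      simp
    have hgu : g u = w := by
      rw [hg, Equiv.Perm.mul_apply,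
        Equiv.swap_apply_of_ne_of_ne (Ne.symm hc.1) (Ne.symm hd.1), Equiv.swap_apply_left]
    have := hstep g (hsub hgA) u
    rwa [hgu] at this
  have hρ1 : Alt237.cyc ρ = 1 := Alt237.cyc_eq_one htot
  rw [hLprod, Alt237.cyc_one, hρ1, hcard] at hcount
  have hlen : L.length = Lx.length + (Ly.length + Lz.length) := by
    simp [hL]
  omega
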